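/- Let A ∈ ℝ^{n×n}, B ∈ ℝ^{n×m}, N ≥ 1, an initial state x̂ ∈ ℝⁿ, and reference points x̄_0, …, x̄_N ∈ ℝⁿ and ū_0, …, ū_{N−1} ∈ ℝᵐ. Define backwards P_N = I and, for t = N−1, …, 0: R̃_t = I + Bᵀ P_{t+1} B, K_t = −R̃_t⁻¹ Bᵀ P_{t+1} A, Ā_t = A + B K_t, P_t = I + K_tᵀ K_t + Ā_tᵀ P_{t+1} Ā_t; also q_N = −x̄_N and, for t = N−1, …, 0: d_t = R̃_t⁻¹(ū_t − Bᵀ q_{t+1}), q_t = K_tᵀ(d_t − ū_t) − x̄_t + Ā_tᵀ(P_{t+1} B d_t + q_{t+1}). Define the forward pass x_0 = x̂, u_t = K_t x_t + d_t, x_{t+1} = A x_t + B u_t for t = 0, …, N−1. Then (x_0, …, x_N, u_0, …, u_{N−1}) is the unique minimizer of Σ_{t=0}^{N−1} (1/2)(‖x'_t − x̄_t‖² + ‖u'_t − ū_t‖²) + (1/2)‖x'_N − x̄_N‖² over all sequences (x'_t)_{t=0}^{N}, (u'_t)_{t=0}^{N−1} satisfying x'_0 = x̂ and x'_{t+1}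 = A x'_t + B u'_t for all t = 0, …, N−1. -/
import Mathlib

open Matrix

/-- The total squared-distance cost of a candidate trajectory
`(x'_0, …, x'_N, u'_0, …, u'_{N−1})` to the reference `(x̄, ū)`. -/
noncomputable def lqrCost {n m : ℕ} (N : ℕ)
    (xbar : ℕ → EuclideanSpace ℝ (Fin n)) (ubar : ℕ → EuclideanSpace ℝ (Fin m))
    (x' : ℕ → EuclideanSpace ℝ (Fin n)) (u' : ℕ → EuclideanSpace ℝ (Fin m)) : ℝ :=
  (∑ t ∈ Finset.range N,
      (1 / 2 * ‖x' t - xbar t‖ ^ 2 + 1 / 2 * ‖u' t - ubar t‖ ^ 2)) +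
    1 / 2 * ‖x' N - xbar N‖ ^ 2

/-- Feasibility: the trajectory starts at `x̂` and follows the linear dynamics
`x'_{t+1} = A x'_t + B u'_t` for `t = 0, …, N−1`. -/
def lqrFeasible {n m : ℕ} (N : ℕ)
    (A : Matrix (Fin n) (Fin n) ℝ) (B : Matrix (Fin n) (Fin m) ℝ)
    (xhat : EuclideanSpace ℝ (Fin n))
    (x' : ℕ → EuclideanSpace ℝ (Fin n)) (u' : ℕ → EuclideanSpace ℝ (Fin m)) : Prop :=
  x' 0 = xhat ∧
    ∀ t < N, x' (t + 1) = toEuclideanLin A (x' t) + toEuclideanLin B (u' t)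

open RealInnerProductSpace

set_option linter.unusedSectionVars false
section RicAux
variable {a b c : Type*} [Fintype a] [Fintype b] [Fintype c]
  [DecidableEq a] [DecidableEq b] [DecidableEq c]

lemma ricL_mul (M : Matrix a b ℝ) (N : Matrix b c ℝ) (v : EuclideanSpace ℝ c) :
    toEuclideanLin (M * N) v = toEuclideanLin M (toEuclideanLin N v) := by
  simp [toEuclideanLin_apply, mulVec_mulVec]

lemma ricL_one (v : EuclideanSpace ℝ a) : toEuclideanLin (1 : Matrix a a ℝ) v = v := by
  simp [toEuclideanLin_apply]

lemma inner_L_transpose (M : Matrix a b ℝ) (x : EuclideanSpace ℝ a) (y : EuclideanSpace ℝ b) :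
    ⟪toEuclideanLin Mᵀ x, y⟫ = ⟪x, toEuclideanLin M y⟫ := by
  rw [← conjTranspose_eq_transpose_of_trivial, toEuclideanLin_conjTranspose_eq_adjoint,
    LinearMap.adjoint_inner_left]

lemma inner_L_transpose' (M : Matrix a b ℝ) (x : EuclideanSpace ℝ b) (y : EuclideanSpace ℝ a) :
    ⟪x, toEuclideanLin Mᵀ y⟫ = ⟪toEuclideanLin M x, y⟫ := by
  rw [real_inner_comm, inner_L_transpose, real_inner_comm]

end RicAux

set_option maxHeartbeats 1000000 in
lemma ric_key {E F : Type*} [NormedAddCommGroup E] [InnerProductSpace ℝ E]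
    [NormedAddCommGroup F] [InnerProductSpace ℝ F]
    (a : E →ₗ[ℝ] E) (b : F →ₗ[ℝ] E) (p : E →ₗ[ℝ] E) (k : E →ₗ[ℝ] F)
    (xb q' : E) (ub d : F)
    (hp : ∀ v w : E, ⟪v, p w⟫ = ⟪w, p v⟫)
    (hk : ∀ (v : E) (w : F), ⟪w, k v⟫ + ⟪b w, p (b (k v))⟫ + ⟪b w, p (a v)⟫ = 0)
    (hd : ∀ w : F, ⟪w, d⟫ + ⟪b w, p (b d)⟫ + ⟪b w, q'⟫ = ⟪w, ub⟫)
    (z : E) (w : F) :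
    1/2 * ‖z - xb‖^2 + 1/2 * ‖w - ub‖^2
      + (1/2 * ⟪a z + b w, p (a z + b w)⟫ + ⟪q', a z + b w⟫)
    = (1/2 * (⟪z, z⟫ + ⟪k z, k z⟫ + ⟪a z + b (k z), p (a z + b (k z))⟫)
        + (⟪d - ub, k z⟫ - ⟪xb, z⟫ + ⟪p (b d) + q', a z + b (k z)⟫))
      + (1/2 * ‖w - k z - d‖^2 + 1/2 * ⟪b (w - k z - d), p (b (w - k z - d))⟫)
      + (1/2 * ‖xb‖^2 + 1/2 * ‖d - ub‖^2 + 1/2 * ⟪b d, p (b d)⟫ + ⟪q', b d⟫) := by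
  simp only [← real_inner_self_eq_norm_sq]
  simp only [map_sub, map_add, inner_sub_left, inner_sub_right, inner_add_left, inner_add_right]
  linarith [hk z w, hk z (k z), hk z d, hd w, hd (k z), hd d,
    hp (a z) (b w), hp (a z) (b (k z)), hp (a z) (b d), hp (b w) (b (k z)),
    hp (b w) (b d), hp (b (k z)) (b d),
    real_inner_comm (z) (xb), real_inner_comm w ub, real_inner_comm d ub,
    real_inner_comm w (k z), real_inner_comm w d, real_inner_comm (k z) d,
    real_inner_comm ub (k z), real_inner_comm ub d,
    real_inner_comm q' (a z), real_inner_comm q' (b w), real_inner_comm q' (b (k z)),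
    real_inner_comm q' (b d), real_inner_comm ub w, real_inner_comm xb z,
    real_inner_comm d (k z), real_inner_comm d w, real_inner_comm (k z) w,
    real_inner_comm (p (b d)) (a z), real_inner_comm (p (b d)) (b (k z))]

set_option maxHeartbeats 2000000 in
/-- Correctness of the Riccati factorization and backward/forward passes
(Algorithms 1 and 2 of the paper, one child per node): the trajectory produced
by the forward pass is the unique minimizer of the squared distance to the
reference trajectory `(x̄, ū)` among all trajectories satisfying the dynamics
`x_{t+1} = A x_t + B u_t` and the initial condition `x_0 = x̂`; i.e. it is the
metric projection of the reference onto the dynamics set `S₁`. -/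
theorem riccati_projection_correct {n m N : ℕ} (hN : 1 ≤ N)
    (A : Matrix (Fin n) (Fin n) ℝ) (B : Matrix (Fin n) (Fin m) ℝ)
    (xhat : EuclideanSpace ℝ (Fin n))
    (xbar : ℕ → EuclideanSpace ℝ (Fin n)) (ubar : ℕ → EuclideanSpace ℝ (Fin m))
    (P : ℕ → Matrix (Fin n) (Fin n) ℝ)
    (Rt : ℕ → Matrix (Fin m) (Fin m) ℝ)
    (K : ℕ → Matrix (Fin m) (Fin n) ℝ)
    (Ab : ℕ → Matrix (Fin n) (Fin n) ℝ)
    (q : ℕ → EuclideanSpace ℝ (Fin n)) (d : ℕ → EuclideanSpace ℝ (Fin m))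
    (x : ℕ → EuclideanSpace ℝ (Fin n)) (u : ℕ → EuclideanSpace ℝ (Fin m))
    (hPN : P N = 1)
    (hRt : ∀ t < N, Rt t = 1 + Bᵀ * P (t + 1) * B)
    (hK : ∀ t < N, K t = -((Rt t)⁻¹ * Bᵀ * P (t + 1) * A))
    (hAb : ∀ t < N, Ab t = A + B * K t)
    (hP : ∀ t < N, P t = 1 + (K t)ᵀ * K t + (Ab t)ᵀ * P (t + 1) * Ab t)
    (hqN : q N = -xbar N)
    (hd : ∀ t < N, d t = toEuclideanLin (Rt t)⁻¹
      (ubar t - toEuclideanLin Bᵀ (q (t + 1))))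
    (hq : ∀ t < N, q t = toEuclideanLin (K t)ᵀ (d t - ubar t) - xbar t +
      toEuclideanLin (Ab t)ᵀ (toEuclideanLin (P (t + 1) * B) (d t) + q (t + 1)))
    (hx0 : x 0 = xhat)
    (hu : ∀ t < N, u t = toEuclideanLin (K t) (x t) + d t)
    (hx : ∀ t < N, x (t + 1) = toEuclideanLin A (x t) + toEuclideanLin B (u t)) :
    lqrFeasible N A B xhat x u ∧
      ∀ x' u', lqrFeasible N A B xhat x' u' →
        lqrCost N xbar ubar x u ≤ lqrCost N xbar ubar x' u' ∧
          (lqrCost N xbar ubar x' u' ≤ lqrCost N xbar ubar x u →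
            (∀ t ≤ N, x' t = x t) ∧ ∀ t < N, u' t = u t) := by
  classical
  -- ============ symmetry and positive semidefiniteness of P ============
  have hbase : (P N)ᵀ = P N ∧
      ∀ v : EuclideanSpace ℝ (Fin n), 0 ≤ ⟪v, toEuclideanLin (P N) v⟫ := by
    rw [hPN]
    exact ⟨Matrix.transpose_one, fun v => by rw [ricL_one]; exact real_inner_self_nonneg⟩
  have hsymPos : ∀ k t, t ≤ N → N - t ≤ k → (P t)ᵀ = P t ∧
      ∀ v : EuclideanSpace ℝ (Fin n), 0 ≤ ⟪v, toEuclideanLin (P t) v⟫ := by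
    intro k
    induction k with
    | zero =>
      intro t ht hk
      have : t = N := by omega
      rw [this]; exact hbase
    | succ k ih =>
      intro t ht hk
      by_cases hEq : t = N
      · rw [hEq]; exact hbase
      · have htN : t < N := lt_of_le_of_ne ht hEq
        obtain ⟨hs, hpos⟩ := ih (t + 1) (by omega) (by omega)
        have hexp : ∀ v : EuclideanSpace ℝ (Fin n),
            toEuclideanLin (P t) v = v + toEuclideanLin (K t)ᵀ (toEuclideanLin (K t) v)
              + toEuclideanLin (Ab t)ᵀ
                  (toEuclideanLin (P (t + 1)) (toEuclideanLin (Ab t) v)) := by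
          intro v
          rw [hP t htN]
          simp [map_add, LinearMap.add_apply, ricL_mul, ricL_one]
        constructor
        · rw [hP t htN]
          simp [Matrix.transpose_add, Matrix.transpose_mul, Matrix.transpose_one,
            Matrix.transpose_transpose, hs, Matrix.mul_assoc]
        · intro v
          rw [hexp v, inner_add_right, inner_add_right, inner_L_transpose',
            inner_L_transpose']
          have h1 : (0:ℝ) ≤ ⟪v, v⟫ := real_inner_self_nonneg
          have h2 : (0:ℝ) ≤ ⟪toEuclideanLin (K t) v, toEuclideanLin (K t) v⟫ :=
            real_inner_self_nonneg
          have h3 := hpos (toEuclideanLin (Ab t) v)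
          linarith
  -- ============ invertibility of Rt ============
  have hRunit : ∀ t < N, Rt t * (Rt t)⁻¹ = 1 := by
    intro t ht
    obtain ⟨hs, hpos⟩ := hsymPos N (t + 1) (by omega) (by omega)
    apply Matrix.mul_nonsing_inv
    rw [isUnit_iff_ne_zero]
    intro hdet
    obtain ⟨v, hv0, hv⟩ := (Matrix.exists_mulVec_eq_zero_iff).2 hdet
    set v' : EuclideanSpace ℝ (Fin m) := (WithLp.equiv 2 _).symm v with hv'
    have hLv : toEuclideanLin (Rt t) v' = 0 := by
      rw [toEuclideanLin_apply]
      simp [hv', hv]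
    have hquad : ⟪v', toEuclideanLin (Rt t) v'⟫
        = ⟪v', v'⟫ + ⟪toEuclideanLin B v',
            toEuclideanLin (P (t + 1)) (toEuclideanLin B v')⟫ := by
      rw [hRt t ht]
      simp only [map_add, LinearMap.add_apply, ricL_mul, ricL_one, inner_add_right]
      rw [inner_L_transpose']
    have h0 : (0 : ℝ) = ⟪v', v'⟫ + ⟪toEuclideanLin B v',
        toEuclideanLin (P (t + 1)) (toEuclideanLin B v')⟫ := by
      rw [← hquad, hLv, inner_zero_right]
    have h3 := hpos (toEuclideanLin B v')
    have hvv : ⟪v', v'⟫ = (0 : ℝ) := by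
      have hnn : (0:ℝ) ≤ ⟪v', v'⟫ := real_inner_self_nonneg
      linarith
    have : v' = 0 := by
      rwa [real_inner_self_eq_norm_sq, pow_eq_zero_iff (by norm_num), norm_eq_zero] at hvv
    apply hv0
    have : (WithLp.equiv 2 (Fin m → ℝ)) v' = (WithLp.equiv 2 (Fin m → ℝ)) 0 := by rw [this]
    simpa [hv'] using this
  -- ============ scalar identities E1 (gain equation) ============
  have hE1 : ∀ t < N, ∀ (v : EuclideanSpace ℝ (Fin n)) (w : EuclideanSpace ℝ (Fin m)),
      ⟪w, toEuclideanLin (K t) v⟫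
        + ⟪toEuclideanLin B w, toEuclideanLin (P (t + 1))
            (toEuclideanLin B (toEuclideanLin (K t) v))⟫
        + ⟪toEuclideanLin B w, toEuclideanLin (P (t + 1)) (toEuclideanLin A v)⟫ = 0 := by
    intro t ht v w
    have hmat : K t + Bᵀ * P (t + 1) * B * K t + Bᵀ * P (t + 1) * A = 0 := by
      have h2 : Rt t * ((Rt t)⁻¹ * (Bᵀ * P (t + 1) * A)) = Bᵀ * P (t + 1) * A := by
        rw [← Matrix.mul_assoc, hRunit t ht, Matrix.one_mul]
      nth_rewrite 1 [hRt t ht] at h2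
      rw [Matrix.add_mul, Matrix.one_mul] at h2
      rw [hK t ht]
      simp only [Matrix.mul_assoc] at h2 ⊢
      simp only [Matrix.mul_neg, Matrix.neg_mul]
      linear_combination (norm := abel) -h2
    have hv := congrArg (fun M => toEuclideanLin M v) hmat
    simp only [map_add, LinearMap.add_apply, map_zero, LinearMap.zero_apply, ricL_mul] at hv
    calc ⟪w, toEuclideanLin (K t) v⟫
          + ⟪toEuclideanLin B w, toEuclideanLin (P (t + 1))
              (toEuclideanLin B (toEuclideanLin (K t) v))⟫
          + ⟪toEuclideanLin B w, toEuclideanLin (P (t + 1)) (toEuclideanLin A v)⟫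
        = ⟪w, toEuclideanLin (K t) v
            + toEuclideanLin Bᵀ (toEuclideanLin (P (t + 1))
                (toEuclideanLin B (toEuclideanLin (K t) v)))
            + toEuclideanLin Bᵀ (toEuclideanLin (P (t + 1)) (toEuclideanLin A v))⟫ := by
          rw [inner_add_right, inner_add_right, inner_L_transpose', inner_L_transpose']
      _ = ⟪w, (0 : EuclideanSpace ℝ (Fin m))⟫ := by rw [hv]
      _ = 0 := inner_zero_right _
  -- ============ scalar identities E2 (feedforward equation) ============
  have hE2 : ∀ t < N, ∀ w : EuclideanSpace ℝ (Fin m),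
      ⟪w, d t⟫ + ⟪toEuclideanLin B w, toEuclideanLin (P (t + 1))
          (toEuclideanLin B (d t))⟫
        + ⟪toEuclideanLin B w, q (t + 1)⟫ = ⟪w, ubar t⟫ := by
    intro t ht w
    have h1 : toEuclideanLin (Rt t) (d t) = ubar t - toEuclideanLin Bᵀ (q (t + 1)) := by
      rw [hd t ht, ← ricL_mul, hRunit t ht, ricL_one]
    have h2 : toEuclideanLin (Rt t) (d t)
        = d t + toEuclideanLin Bᵀ (toEuclideanLin (P (t + 1))
            (toEuclideanLin B (d t))) := by
      rw [hRt t ht]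
      simp [map_add, LinearMap.add_apply, ricL_mul, ricL_one]
    rw [h2] at h1
    have h3 : d t + toEuclideanLin Bᵀ (toEuclideanLin (P (t + 1))
        (toEuclideanLin B (d t))) + toEuclideanLin Bᵀ (q (t + 1)) = ubar t :=
      eq_sub_iff_add_eq.mp h1
    calc ⟪w, d t⟫ + ⟪toEuclideanLin B w, toEuclideanLin (P (t + 1))
            (toEuclideanLin B (d t))⟫ + ⟪toEuclideanLin B w, q (t + 1)⟫
        = ⟪w, d t + toEuclideanLin Bᵀ (toEuclideanLin (P (t + 1))
            (toEuclideanLin B (d t))) + toEuclideanLin Bᵀ (q (t + 1))⟫ := by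
          rw [inner_add_right, inner_add_right, inner_L_transpose', inner_L_transpose']
      _ = ⟪w, ubar t⟫ := by rw [h3]
  -- ============ stage identity ============
  have stage : ∀ t < N, ∀ (z : EuclideanSpace ℝ (Fin n)) (w : EuclideanSpace ℝ (Fin m)),
      1/2 * ‖z - xbar t‖^2 + 1/2 * ‖w - ubar t‖^2
        + (1/2 * ⟪toEuclideanLin A z + toEuclideanLin B w,
            toEuclideanLin (P (t + 1)) (toEuclideanLin A z + toEuclideanLin B w)⟫
          + ⟪q (t + 1), toEuclideanLin A z + toEuclideanLin B w⟫)
      = (1/2 * ⟪z, toEuclideanLin (P t) z⟫ + ⟪q t, z⟫)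
        + (1/2 * ‖w - toEuclideanLin (K t) z - d t‖^2
          + 1/2 * ⟪toEuclideanLin B (w - toEuclideanLin (K t) z - d t),
              toEuclideanLin (P (t + 1))
                (toEuclideanLin B (w - toEuclideanLin (K t) z - d t))⟫)
        + (1/2 * ‖xbar t‖^2 + 1/2 * ‖d t - ubar t‖^2
          + 1/2 * ⟪toEuclideanLin B (d t),
              toEuclideanLin (P (t + 1)) (toEuclideanLin B (d t))⟫
          + ⟪q (t + 1), toEuclideanLin B (d t)⟫) := by
    intro t ht z w
    obtain ⟨hs, hpos⟩ := hsymPos N (t + 1) (by omega) (by omega)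
    have hp' : ∀ v w : EuclideanSpace ℝ (Fin n),
        ⟪v, toEuclideanLin (P (t + 1)) w⟫ = ⟪w, toEuclideanLin (P (t + 1)) v⟫ := by
      intro v w
      conv_lhs => rw [← hs, inner_L_transpose']
      exact real_inner_comm _ _
    have hkey := ric_key (toEuclideanLin A) (toEuclideanLin B) (toEuclideanLin (P (t + 1)))
      (toEuclideanLin (K t)) (xbar t) (q (t + 1)) (ubar t) (d t) hp' (hE1 t ht) (hE2 t ht) z w
    have hAbz : toEuclideanLin (Ab t) z
        = toEuclideanLin A z + toEuclideanLin B (toEuclideanLin (K t) z) := by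
      rw [hAb t ht]
      simp [map_add, LinearMap.add_apply, ricL_mul]
    have hGt : 1/2 * ⟪z, toEuclideanLin (P t) z⟫ + ⟪q t, z⟫
        = 1/2 * (⟪z, z⟫ + ⟪toEuclideanLin (K t) z, toEuclideanLin (K t) z⟫
            + ⟪toEuclideanLin A z + toEuclideanLin B (toEuclideanLin (K t) z),
                toEuclideanLin (P (t + 1))
                  (toEuclideanLin A z + toEuclideanLin B (toEuclideanLin (K t) z))⟫)
          + (⟪d t - ubar t, toEuclideanLin (K t) z⟫ - ⟪xbar t, z⟫
            + ⟪toEuclideanLin (P (t + 1)) (toEuclideanLin B (d t)) + q (t + 1),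
                toEuclideanLin A z + toEuclideanLin B (toEuclideanLin (K t) z)⟫) := by
      have h1 : ⟪z, toEuclideanLin (P t) z⟫
          = ⟪z, z⟫ + ⟪toEuclideanLin (K t) z, toEuclideanLin (K t) z⟫
            + ⟪toEuclideanLin (Ab t) z,
                toEuclideanLin (P (t + 1)) (toEuclideanLin (Ab t) z)⟫ := by
        rw [hP t ht]
        simp only [map_add, LinearMap.add_apply, ricL_mul, ricL_one]
        rw [inner_add_right, inner_add_right, inner_L_transpose', inner_L_transpose']
      have h2 : ⟪q t, z⟫
          = ⟪d t - ubar t, toEuclideanLin (K t) z⟫ - ⟪xbar t, z⟫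
            + ⟪toEuclideanLin (P (t + 1)) (toEuclideanLin B (d t)) + q (t + 1),
                toEuclideanLin (Ab t) z⟫ := by
        rw [hq t ht]
        rw [inner_add_left, inner_sub_left, inner_L_transpose, inner_L_transpose, ricL_mul]
      rw [h1, h2, hAbz]
    linarith [hkey, hGt]
  -- ============ cost identity ============
  have costEq : ∀ (x' : ℕ → EuclideanSpace ℝ (Fin n)) (u' : ℕ → EuclideanSpace ℝ (Fin m)),
      lqrFeasible N A B xhat x' u' →
      lqrCost N xbar ubar x' u'
        = ((1/2 * ⟪xhat, toEuclideanLin (P 0) xhat⟫ + ⟪q 0, xhat⟫)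
            + (∑ t ∈ Finset.range N, (1/2 * ‖xbar t‖^2 + 1/2 * ‖d t - ubar t‖^2
              + 1/2 * ⟪toEuclideanLin B (d t),
                  toEuclideanLin (P (t + 1)) (toEuclideanLin B (d t))⟫
              + ⟪q (t + 1), toEuclideanLin B (d t)⟫))
            + 1/2 * ‖xbar N‖^2)
          + ∑ t ∈ Finset.range N, (1/2 * ‖u' t - toEuclideanLin (K t) (x' t) - d t‖^2
              + 1/2 * ⟪toEuclideanLin B (u' t - toEuclideanLin (K t) (x' t) - d t),
                  toEuclideanLin (P (t + 1))
                    (toEuclideanLin B (u' t - toEuclideanLin (K t) (x' t) - d t))⟫) := by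
    rintro x' u' ⟨h0, hdyn⟩
    have hstage : ∀ t ∈ Finset.range N,
        1/2 * ‖x' t - xbar t‖^2 + 1/2 * ‖u' t - ubar t‖^2
        = (((1/2 * ⟪x' t, toEuclideanLin (P t) (x' t)⟫ + ⟪q t, x' t⟫)
            - (1/2 * ⟪x' (t + 1), toEuclideanLin (P (t + 1)) (x' (t + 1))⟫
                + ⟪q (t + 1), x' (t + 1)⟫))
          + (1/2 * ‖u' t - toEuclideanLin (K t) (x' t) - d t‖^2
              + 1/2 * ⟪toEuclideanLin B (u' t - toEuclideanLin (K t) (x' t) - d t),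
                  toEuclideanLin (P (t + 1))
                    (toEuclideanLin B (u' t - toEuclideanLin (K t) (x' t) - d t))⟫))
          + (1/2 * ‖xbar t‖^2 + 1/2 * ‖d t - ubar t‖^2
            + 1/2 * ⟪toEuclideanLin B (d t),
                toEuclideanLin (P (t + 1)) (toEuclideanLin B (d t))⟫
            + ⟪q (t + 1), toEuclideanLin B (d t)⟫) := by
      intro t ht
      rw [Finset.mem_range] at ht
      have hst := stage t ht (x' t) (u' t)
      rw [← hdyn t ht] at hst
      linarith
    have hterm : 1/2 * ‖x' N - xbar N‖^2
        = (1/2 * ⟪x' N, toEuclideanLin (P N) (x' N)⟫ + ⟪q N, x' N⟫)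
          + 1/2 * ‖xbar N‖^2 := by
      rw [hPN, hqN, ricL_one, inner_neg_left]
      have hnrm : ‖x' N - xbar N‖^2
          = ⟪x' N, x' N⟫ - 2 * ⟪xbar N, x' N⟫ + ‖xbar N‖^2 := by
        rw [← real_inner_self_eq_norm_sq, ← real_inner_self_eq_norm_sq]
        simp only [inner_sub_left, inner_sub_right]
        linarith [real_inner_comm (x' N) (xbar N)]
      linarith
    unfold lqrCost
    rw [Finset.sum_congr rfl hstage, hterm]
    rw [Finset.sum_add_distrib, Finset.sum_add_distrib]
    rw [Finset.sum_range_sub' (fun t => 1/2 * ⟪x' t, toEuclideanLin (P t) (x' t)⟫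
      + ⟪q t, x' t⟫) N]
    rw [h0]
    ring
  -- ============ nonnegativity of the error terms ============
  have hErrNonneg : ∀ (x' : ℕ → EuclideanSpace ℝ (Fin n)) (u' : ℕ → EuclideanSpace ℝ (Fin m)),
      ∀ t ∈ Finset.range N,
      (0:ℝ) ≤ 1/2 * ‖u' t - toEuclideanLin (K t) (x' t) - d t‖^2
          + 1/2 * ⟪toEuclideanLin B (u' t - toEuclideanLin (K t) (x' t) - d t),
              toEuclideanLin (P (t + 1))
                (toEuclideanLin B (u' t - toEuclideanLin (K t) (x' t) - d t))⟫ := by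
    intro x' u' t ht
    rw [Finset.mem_range] at ht
    obtain ⟨hs, hpos⟩ := hsymPos N (t + 1) (by omega) (by omega)
    have h1 : (0:ℝ) ≤ ‖u' t - toEuclideanLin (K t) (x' t) - d t‖^2 := by positivity
    have h2 := hpos (toEuclideanLin B (u' t - toEuclideanLin (K t) (x' t) - d t))
    linarith
  -- ============ the optimal cost ============
  have hfeasxu : lqrFeasible N A B xhat x u := ⟨hx0, hx⟩
  have hcx : lqrCost N xbar ubar x u
      = ((1/2 * ⟪xhat, toEuclideanLin (P 0) xhat⟫ + ⟪q 0, xhat⟫)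
          + (∑ t ∈ Finset.range N, (1/2 * ‖xbar t‖^2 + 1/2 * ‖d t - ubar t‖^2
            + 1/2 * ⟪toEuclideanLin B (d t),
                toEuclideanLin (P (t + 1)) (toEuclideanLin B (d t))⟫
            + ⟪q (t + 1), toEuclideanLin B (d t)⟫))
          + 1/2 * ‖xbar N‖^2) := by
    rw [costEq x u hfeasxu]
    have hz : ∀ t ∈ Finset.range N,
        (1/2 * ‖u t - toEuclideanLin (K t) (x t) - d t‖^2
          + 1/2 * ⟪toEuclideanLin B (u t - toEuclideanLin (K t) (x t) - d t),
              toEuclideanLin (P (t + 1))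
                (toEuclideanLin B (u t - toEuclideanLin (K t) (x t) - d t))⟫) = 0 := by
      intro t ht
      rw [Finset.mem_range] at ht
      have he : u t - toEuclideanLin (K t) (x t) - d t = 0 := by
        rw [hu t ht]; abel
      rw [he]
      simp
    rw [Finset.sum_eq_zero hz, add_zero]
  refine ⟨hfeasxu, fun x' u' hfeas => ?_⟩
  have hcx' := costEq x' u' hfeas
  have hnn := hErrNonneg x' u'
  constructor
  · rw [hcx, hcx']
    have := Finset.sum_nonneg hnn
    linarith
  · intro hle
    rw [hcx', hcx] at hle
    have hsum0 : ∑ t ∈ Finset.range N, (1/2 * ‖u' t - toEuclideanLin (K t) (x' t) - d t‖^2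
        + 1/2 * ⟪toEuclideanLin B (u' t - toEuclideanLin (K t) (x' t) - d t),
            toEuclideanLin (P (t + 1))
              (toEuclideanLin B (u' t - toEuclideanLin (K t) (x' t) - d t))⟫) = 0 := by
      have := Finset.sum_nonneg hnn
      linarith
    have hux : ∀ t < N, u' t = toEuclideanLin (K t) (x' t) + d t := by
      intro t ht
      have h := (Finset.sum_eq_zero_iff_of_nonneg hnn).1 hsum0 t (Finset.mem_range.2 ht)
      obtain ⟨hs, hpos⟩ := hsymPos N (t + 1) (by omega) (by omega)
      have h2 := hpos (toEuclideanLin B (u' t - toEuclideanLin (K t) (x' t) - d t))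
      have h3 : ‖u' t - toEuclideanLin (K t) (x' t) - d t‖^2 ≤ 0 := by linarith
      have h4 : ‖u' t - toEuclideanLin (K t) (x' t) - d t‖^2 = 0 :=
        le_antisymm h3 (by positivity)
      have h5 : u' t - toEuclideanLin (K t) (x' t) - d t = 0 := by
        rwa [pow_eq_zero_iff (by norm_num), norm_eq_zero] at h4
      have h6 : u' t - (toEuclideanLin (K t) (x' t) + d t) = 0 := by
        rw [← h5]; abel
      exact sub_eq_zero.mp h6
    have hxs : ∀ t, t ≤ N → x' t = x t := by
      intro t
      induction t with
      | zero => intro _; rw [hfeas.1, hx0]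
      | succ t ih =>
        intro hlt
        have htN : t < N := by omega
        have hxt := ih (by omega)
        rw [hfeas.2 t htN, hxt, hux t htN, hxt, ← hu t htN, ← hx t htN]
    exact ⟨hxs, fun t ht => by rw [hux t ht, hxs t (le_of_lt ht), ← hu t ht]⟩
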